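/- Let Φ be a 3-CNF formula with variables x₁,…,x_n and clauses C₁,…,C_m in which every literal occurs in exactly two clauses, and let k = n + 2m. Construct the graph G as follows. For every variable x_i, G contains vertices x_i and ¬x_i together with k−5 vertices c_i^1,…,c_i^{k−5}, each c_i^j adjacent to both x_i and ¬x_i. For every clause C_j with literals l_j^1, l_j^2, l_j^3, G contains three literal vertices l_j^1, l_j^2, l_j^3 and k−3 vertices b_j^1,…,b_j^{k−3}, each b_j^i adjacent to all three literal vertices of C_j. Finally, for every clause C_j and every a ∈ {1,2,3}, G contains two vertices d_j^a and e_j^a, each adjacent to the literal vertex l_j^a and additionally adjacent to the variable-gadget vertex (x_i or ¬x_i) that corresponds to the literal l_j^a. Then Φ is satisfiable if and only if G has a set B of at most k vertices such that every connected component of G − B has at most k vertices. Moreover, G is bipartite, and if such a set B exists then one exists consisting only of vertices in {x_i, ¬x_i : 1 ≤ i ≤ n} ∪ {l_j^a : 1 ≤ j ≤ m, a ∈ {1,2,3}}. -/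

import Mathlib

/-- Every connected component of `G` after deleting the vertex set `B` has at most
`k` vertices. -/
def SmallComponents {V : Type*} (G : SimpleGraph V) (B : Set V) (k : ℕ) : Prop :=
  ∀ c : (G.induce Bᶜ).ConnectedComponent, c.supp.ncard ≤ k

/-- The vertices of the graph built from a 3-CNF formula with `n` variables and `m` clauses
(where `k = n + 2m`): literal vertices `x_i`/`¬x_i` of the variable gadgets (`var i s`),
the `k − 5` middle vertices `c_i^j` of the variable gadgets (`cv`), the three literal
vertices `l_j^a` of each clause gadget (`lit`), the `k − 3` middle vertices `b_j^i` of the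
clause gadgets (`bv`), and the pendant pairs `d_j^a` (`dv`) and `e_j^a` (`ev`). -/
inductive SatVert (n m : ℕ) where
  | var : Fin n → Bool → SatVert n m
  | cv : Fin n → Fin (n + 2 * m - 5) → SatVert n m
  | lit : Fin m → Fin 3 → SatVert n m
  | bv : Fin m → Fin (n + 2 * m - 3) → SatVert n m
  | dv : Fin m → Fin 3 → SatVert n m
  | ev : Fin m → Fin 3 → SatVert n m
  deriving DecidableEq

/-- The adjacency-generating relation of the reduction graph. The literal in position `a` of
clause `j` is `lit j a = (i, s)`, representing `x_i` if `s = true` and `¬x_i` if `s = false`.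
Each `c_i^j` is adjacent to `x_i` and `¬x_i`; each `b_j^i` is adjacent to the three literal
vertices of clause `j`; each of `d_j^a`, `e_j^a` is adjacent to the literal vertex `l_j^a`
and to the variable-gadget vertex corresponding to that literal. -/
def satRel (n m : ℕ) (lit : Fin m → Fin 3 → Fin n × Bool) :
    SatVert n m → SatVert n m → Prop
  | .cv i _, .var i' _ => i = i'
  | .bv j _, .lit j' _ => j = j'
  | .dv j a, .lit j' a' => j = j' ∧ a = a'
  | .ev j a, .lit j' a' => j = j' ∧ a = a'
  | .dv j a, .var i s => lit j a = (i, s)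
  | .ev j a, .var i s => lit j a = (i, s)
  | _, _ => False

open SimpleGraph Finset

namespace Aux

def satEquiv (n m : ℕ) : SatVert n m ≃
    (Fin n × Bool) ⊕ (Fin n × Fin (n + 2 * m - 5)) ⊕ (Fin m × Fin 3) ⊕
      (Fin m × Fin (n + 2 * m - 3)) ⊕ (Fin m × Fin 3) ⊕ (Fin m × Fin 3) where
  toFun v := match v with
    | .var i s => Sum.inl (i, s)
    | .cv i t => Sum.inr (Sum.inl (i, t))
    | .lit j a => Sum.inr (Sum.inr (Sum.inl (j, a)))
    | .bv j t => Sum.inr (Sum.inr (Sum.inr (Sum.inl (j, t))))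
    | .dv j a => Sum.inr (Sum.inr (Sum.inr (Sum.inr (Sum.inl (j, a)))))
    | .ev j a => Sum.inr (Sum.inr (Sum.inr (Sum.inr (Sum.inr (j, a)))))
  invFun x := match x with
    | Sum.inl (i, s) => .var i s
    | Sum.inr (Sum.inl (i, t)) => .cv i t
    | Sum.inr (Sum.inr (Sum.inl (j, a))) => .lit j a
    | Sum.inr (Sum.inr (Sum.inr (Sum.inl (j, t)))) => .bv j t
    | Sum.inr (Sum.inr (Sum.inr (Sum.inr (Sum.inl (j, a))))) => .dv j a
    | Sum.inr (Sum.inr (Sum.inr (Sum.inr (Sum.inr (j, a))))) => .ev j a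
  left_inv v := by cases v <;> rfl
  right_inv x := by rcases x with ⟨i,s⟩|⟨⟨i,t⟩⟩|⟨⟨j,a⟩⟩|⟨⟨j,t⟩⟩|⟨⟨j,a⟩⟩|⟨j,a⟩ <;> rfl

instance (n m : ℕ) : Fintype (SatVert n m) := Fintype.ofEquiv _ (satEquiv n m).symm

lemma walk_const {V : Type*} {ι : Sort*} {G : SimpleGraph V} (f : V → ι)
    (hf : ∀ v w, G.Adj v w → f v = f w) {a b : V} (p : G.Walk a b) : f a = f b := by
  induction p with
  | nil => rfl
  | cons h _ ih => exact (hf _ _ h).trans ih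

lemma comp_bound {V : Type*} [Fintype V] {G : SimpleGraph V} {B : Set V} {k : ℕ} {ι : Type*}
    (ρ : V → ι)
    (hinv : ∀ v w : V, v ∈ Bᶜ → w ∈ Bᶜ → G.Adj v w → ρ v = ρ w)
    (hsize : ∀ v : V, v ∈ Bᶜ → ({w : V | w ∈ Bᶜ ∧ ρ w = ρ v}).ncard ≤ k) :
    SmallComponents G B k := by
  intro c
  obtain ⟨v₀, rfl⟩ := c.exists_rep
  have hsub : ((G.induce Bᶜ).connectedComponentMk v₀).supp ⊆
      Subtype.val ⁻¹' {w : V | w ∈ Bᶜ ∧ ρ w = ρ v₀.val} := by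
    intro x hx
    rw [SimpleGraph.ConnectedComponent.mem_supp_iff, SimpleGraph.ConnectedComponent.eq] at hx
    obtain ⟨p⟩ := hx
    have := walk_const (fun y : ↥Bᶜ => ρ y.val)
      (fun y z h => hinv _ _ y.2 z.2 h) p
    exact ⟨x.2, this⟩
  calc ((G.induce Bᶜ).connectedComponentMk v₀).supp.ncard
      = (Subtype.val '' ((G.induce Bᶜ).connectedComponentMk v₀).supp).ncard :=
        (Set.ncard_image_of_injective _ Subtype.val_injective).symm
    _ ≤ ({w : V | w ∈ Bᶜ ∧ ρ w = ρ v₀.val}).ncard := by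
        refine Set.ncard_le_ncard ?_ (Set.toFinite _)
        rintro _ ⟨x, hx, rfl⟩; exact hsub hx
    _ ≤ k := hsize v₀ v₀.2

section Adj
variable {n m : ℕ} {lit : Fin m → Fin 3 → Fin n × Bool}

lemma adj_cv_var (i : Fin n) (t) (s : Bool) :
    (SimpleGraph.fromRel (satRel n m lit)).Adj (.cv i t) (.var i s) := by
  rw [SimpleGraph.fromRel_adj]
  exact ⟨by simp, Or.inl rfl⟩

lemma adj_bv_lit (j : Fin m) (t) (a : Fin 3) :
    (SimpleGraph.fromRel (satRel n m lit)).Adj (.bv j t) (.lit j a) := by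
  rw [SimpleGraph.fromRel_adj]
  exact ⟨by simp, Or.inl rfl⟩

lemma adj_dv_lit (j : Fin m) (a : Fin 3) :
    (SimpleGraph.fromRel (satRel n m lit)).Adj (.dv j a) (.lit j a) := by
  rw [SimpleGraph.fromRel_adj]
  exact ⟨by simp, Or.inl ⟨rfl, rfl⟩⟩

lemma adj_ev_lit (j : Fin m) (a : Fin 3) :
    (SimpleGraph.fromRel (satRel n m lit)).Adj (.ev j a) (.lit j a) := by
  rw [SimpleGraph.fromRel_adj]
  exact ⟨by simp, Or.inl ⟨rfl, rfl⟩⟩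

lemma adj_dv_var (j : Fin m) (a : Fin 3) :
    (SimpleGraph.fromRel (satRel n m lit)).Adj (.dv j a) (.var (lit j a).1 (lit j a).2) := by
  rw [SimpleGraph.fromRel_adj]
  exact ⟨by simp, Or.inl rfl⟩

lemma adj_ev_var (j : Fin m) (a : Fin 3) :
    (SimpleGraph.fromRel (satRel n m lit)).Adj (.ev j a) (.var (lit j a).1 (lit j a).2) := by
  rw [SimpleGraph.fromRel_adj]
  exact ⟨by simp, Or.inl rfl⟩

end Adj

section Forward
variable {n m : ℕ} {lit : Fin m → Fin 3 → Fin n × Bool} (σ : Fin n → Bool) (ch : Fin m → Fin 3)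

def BF (σ : Fin n → Bool) (ch : Fin m → Fin 3) : Finset (SatVert n m) :=
  (univ.image fun i => SatVert.var i (σ i)) ∪
    ((univ.image fun j => SatVert.lit j (ch j + 1)) ∪
      (univ.image fun j => SatVert.lit j (ch j + 2)))

lemma fin3_cases : ∀ x y : Fin 3, y ≠ x → y = x + 1 ∨ y = x + 2 := by decide

lemma fin3_add1 : ∀ x : Fin 3, x + 1 ≠ x := by decide
lemma fin3_add2 : ∀ x : Fin 3, x + 2 ≠ x := by decide

lemma mem_BF_shape {v : SatVert n m} (h : v ∈ BF σ ch) :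
    (∃ i s, v = SatVert.var i s) ∨ (∃ j a, v = SatVert.lit j a) := by
  rcases Finset.mem_union.1 h with h | h
  · rcases Finset.mem_image.1 h with ⟨i, -, he⟩
    exact Or.inl ⟨i, _, he.symm⟩
  · rcases Finset.mem_union.1 h with h | h <;>
    · rcases Finset.mem_image.1 h with ⟨j, -, he⟩
      exact Or.inr ⟨j, _, he.symm⟩

lemma var_mem_BF (i : Fin n) (s : Bool) : SatVert.var i s ∈ BF σ ch ↔ s = σ i := by
  constructor
  · intro h
    rcases Finset.mem_union.1 h with h | h
    · rcases Finset.mem_image.1 h with ⟨i', -, he⟩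
      injection he with h1 h2
      subst h1; exact h2.symm
    · rcases Finset.mem_union.1 h with h | h <;>
      · rcases Finset.mem_image.1 h with ⟨j, -, he⟩
        exact nomatch he
  · rintro rfl
    exact Finset.mem_union_left _ (Finset.mem_image.2 ⟨i, Finset.mem_univ _, rfl⟩)

lemma lit_mem_BF (j : Fin m) (b : Fin 3) : SatVert.lit j b ∈ BF σ ch ↔ b ≠ ch j := by
  constructor
  · intro h
    rcases Finset.mem_union.1 h with h | h
    · rcases Finset.mem_image.1 h with ⟨i', -, he⟩
      exact nomatch he
    · rcases Finset.mem_union.1 h with h | h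
      · rcases Finset.mem_image.1 h with ⟨j', -, he⟩
        injection he with h1 h2
        subst h1; rw [← h2]; exact fin3_add1 _
      · rcases Finset.mem_image.1 h with ⟨j', -, he⟩
        injection he with h1 h2
        subst h1; rw [← h2]; exact fin3_add2 _
  · intro h
    rcases fin3_cases (ch j) b h with rfl | rfl
    · exact Finset.mem_union_right _ (Finset.mem_union_left _
        (Finset.mem_image.2 ⟨j, Finset.mem_univ _, rfl⟩))
    · exact Finset.mem_union_right _ (Finset.mem_union_right _
        (Finset.mem_image.2 ⟨j, Finset.mem_univ _, rfl⟩))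

lemma cv_not_mem_BF (i : Fin n) (t) : SatVert.cv i t ∉ BF σ ch := by
  intro h
  rcases mem_BF_shape σ ch h with ⟨_, _, he⟩ | ⟨_, _, he⟩ <;> exact nomatch he

lemma bv_not_mem_BF (j : Fin m) (t) : SatVert.bv j t ∉ BF σ ch := by
  intro h
  rcases mem_BF_shape σ ch h with ⟨_, _, he⟩ | ⟨_, _, he⟩ <;> exact nomatch he

lemma dv_not_mem_BF (j : Fin m) (a) : SatVert.dv j a ∉ BF σ ch := by
  intro h
  rcases mem_BF_shape σ ch h with ⟨_, _, he⟩ | ⟨_, _, he⟩ <;> exact nomatch he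

lemma ev_not_mem_BF (j : Fin m) (a) : SatVert.ev j a ∉ BF σ ch := by
  intro h
  rcases mem_BF_shape σ ch h with ⟨_, _, he⟩ | ⟨_, _, he⟩ <;> exact nomatch he

lemma card_BF : (BF σ ch : Finset (SatVert n m)).card ≤ n + 2 * m := by
  refine le_trans (Finset.card_union_le _ _) ?_
  have h1 : (univ.image fun i : Fin n => SatVert.var (m := m) i (σ i)).card ≤ n := by
    refine le_trans (Finset.card_image_le) (by simp)
  have h2 := Finset.card_union_le (univ.image fun j : Fin m => SatVert.lit (n := n) j (ch j + 1))
    (univ.image fun j : Fin m => SatVert.lit (n := n) j (ch j + 2))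
  have h3 : (univ.image fun j : Fin m => SatVert.lit (n := n) j (ch j + 1)).card ≤ m :=
    le_trans (Finset.card_image_le) (by simp)
  have h4 : (univ.image fun j : Fin m => SatVert.lit (n := n) j (ch j + 2)).card ≤ m :=
    le_trans (Finset.card_image_le) (by simp)
  omega

variable (lit) in
def rho (σ : Fin n → Bool) (ch : Fin m → Fin 3) :
    SatVert n m → Fin n ⊕ (Fin m ⊕ (Fin m × Fin 3))
  | .var i _ => Sum.inl i
  | .cv i _ => Sum.inl i
  | .lit j _ => Sum.inr (Sum.inl j)
  | .bv j _ => Sum.inr (Sum.inl j)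
  | .dv j a =>
      if a = ch j then Sum.inr (Sum.inl j)
      else if (lit j a).2 = σ (lit j a).1 then Sum.inr (Sum.inr (j, a))
      else Sum.inl (lit j a).1
  | .ev j a =>
      if a = ch j then Sum.inr (Sum.inl j)
      else if (lit j a).2 = σ (lit j a).1 then Sum.inr (Sum.inr (j, a))
      else Sum.inl (lit j a).1

variable (lit) in
lemma rho_rel (hch : ∀ j, σ (lit j (ch j)).1 = (lit j (ch j)).2)
    {v w : SatVert n m} (h : satRel n m lit v w)
    (hv : v ∉ BF σ ch) (hw : w ∉ BF σ ch) : rho lit σ ch v = rho lit σ ch w := by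
  cases v <;> cases w <;> simp only [satRel] at h
  case cv.var i t i' s => subst h; rfl
  case bv.lit j t j' a => subst h; rfl
  case dv.lit j a j' a' =>
    obtain ⟨rfl, rfl⟩ := h
    have ha : a = ch j := by
      by_contra hne
      exact hw ((lit_mem_BF σ ch j a).2 hne)
    simp [rho, ha]
  case ev.lit j a j' a' =>
    obtain ⟨rfl, rfl⟩ := h
    have ha : a = ch j := by
      by_contra hne
      exact hw ((lit_mem_BF σ ch j a).2 hne)
    simp [rho, ha]
  case dv.var j a i s =>
    have hs : s ≠ σ i := fun hs => hw ((var_mem_BF σ ch i s).2 hs)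
    have ha : a ≠ ch j := by
      rintro rfl
      have := hch j
      rw [h] at this
      exact hs this.symm
    have h2 : ¬ ((lit j a).2 = σ (lit j a).1) := by rw [h]; exact hs
    simp only [rho, if_neg ha, if_neg h2, h]
    rw [if_neg hs]
  case ev.var j a i s =>
    have hs : s ≠ σ i := fun hs => hw ((var_mem_BF σ ch i s).2 hs)
    have ha : a ≠ ch j := by
      rintro rfl
      have := hch j
      rw [h] at this
      exact hs this.symm
    have h2 : ¬ ((lit j a).2 = σ (lit j a).1) := by rw [h]; exact hs
    simp only [rho, if_neg ha, if_neg h2, h]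
    rw [if_neg hs]


lemma ncard_le_finset {α : Type*} (s : Set α) (F : Finset α) (h : s ⊆ ↑F) :
    s.ncard ≤ F.card := by
  have := Set.ncard_le_ncard h F.finite_toSet
  rwa [Set.ncard_coe_finset] at this

variable (lit) in
lemma rho_size
    (hocc : ∀ p : Fin n × Bool,
      (Finset.univ.filter fun ja : Fin m × Fin 3 => lit ja.1 ja.2 = p).card = 2)
    (hk : 5 ≤ n + 2 * m) (r : Fin n ⊕ (Fin m ⊕ (Fin m × Fin 3))) :
    ({w : SatVert n m | w ∈ ((BF σ ch : Finset (SatVert n m)) : Set (SatVert n m))ᶜ ∧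
      rho lit σ ch w = r}).ncard ≤ n + 2 * m := by
  rcases r with i | j | ⟨j, a⟩
  · -- variable region
    refine le_trans (ncard_le_finset _
      (({SatVert.var i (!σ i)} ∪ univ.image (SatVert.cv i) ∪
        (univ.filter fun ja : Fin m × Fin 3 => lit ja.1 ja.2 = (i, !σ i)).image
          (fun ja => SatVert.dv ja.1 ja.2) ∪
        (univ.filter fun ja : Fin m × Fin 3 => lit ja.1 ja.2 = (i, !σ i)).image
          (fun ja => SatVert.ev ja.1 ja.2) : Finset (SatVert n m))) ?_) ?_
    · rintro w ⟨hw, hr⟩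
      rw [Set.mem_compl_iff, Finset.mem_coe] at hw
      cases w with
      | var i' s =>
        simp only [rho] at hr
        injection hr with hr
        subst hr
        have hs : s ≠ σ i' := fun hs => hw ((var_mem_BF σ ch i' s).2 hs)
        have hs2 : s = !σ i' := by cases s <;> cases hσ : σ i' <;> simp_all
        subst hs2
        simp
      | cv i' t =>
        simp only [rho] at hr
        injection hr with hr
        subst hr
        simp
      | lit j' a' => simp only [rho] at hr; exact nomatch hr
      | bv j' t => simp only [rho] at hr; exact nomatch hr
      | dv j' a' =>
        simp only [rho] at hr
        split_ifs at hr with h1 h2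
        injection hr with hr
        have hp : lit j' a' = (i, !σ i) := by
          rw [Prod.ext_iff]
          refine ⟨hr, ?_⟩
          rw [hr] at h2
          cases hb : (lit j' a').2 <;> cases hσ : σ i <;> simp_all
        simp only [Finset.mem_coe, Finset.mem_union, Finset.mem_image, Finset.mem_filter]
        exact Or.inl (Or.inr ⟨(j', a'), by simpa using hp, rfl⟩)
      | ev j' a' =>
        simp only [rho] at hr
        split_ifs at hr with h1 h2
        injection hr with hr
        have hp : lit j' a' = (i, !σ i) := by
          rw [Prod.ext_iff]
          refine ⟨hr, ?_⟩
          rw [hr] at h2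
          cases hb : (lit j' a').2 <;> cases hσ : σ i <;> simp_all
        simp only [Finset.mem_coe, Finset.mem_union, Finset.mem_image, Finset.mem_filter]
        exact Or.inr ⟨(j', a'), by simpa using hp, rfl⟩
    · refine le_trans (Finset.card_union_le _ _) ?_
      have h4 : ((univ.filter fun ja : Fin m × Fin 3 => lit ja.1 ja.2 = (i, !σ i)).image
          (fun ja => SatVert.ev (n := n) ja.1 ja.2)).card ≤ 2 := by
        refine le_trans Finset.card_image_le ?_
        rw [hocc (i, !σ i)]
      refine le_trans (Nat.add_le_add (Finset.card_union_le _ _) le_rfl) ?_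
      have h3 : ((univ.filter fun ja : Fin m × Fin 3 => lit ja.1 ja.2 = (i, !σ i)).image
          (fun ja => SatVert.dv (n := n) ja.1 ja.2)).card ≤ 2 := by
        refine le_trans Finset.card_image_le ?_
        rw [hocc (i, !σ i)]
      refine le_trans (Nat.add_le_add (Nat.add_le_add (Finset.card_union_le _ _) h3) h4) ?_
      have h1 : ({SatVert.var (m := m) i (!σ i)} : Finset (SatVert n m)).card = 1 :=
        Finset.card_singleton _
      have h2 : (univ.image (SatVert.cv (m := m) i)).card ≤ n + 2 * m - 5 := by
        refine le_trans Finset.card_image_le ?_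
        simp
      omega
  · -- clause region
    refine le_trans (ncard_le_finset _
      (({SatVert.lit j (ch j)} ∪ univ.image (SatVert.bv j) ∪
        {SatVert.dv j (ch j), SatVert.ev j (ch j)} : Finset (SatVert n m))) ?_) ?_
    · rintro w ⟨hw, hr⟩
      rw [Set.mem_compl_iff, Finset.mem_coe] at hw
      cases w with
      | var i' s => simp only [rho] at hr; exact nomatch hr
      | cv i' t => simp only [rho] at hr; exact nomatch hr
      | lit j' a' =>
        simp only [rho] at hr
        injection hr with hr
        injection hr with hr
        subst hr
        have ha : a' = ch j' := by
          by_contra hne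
          exact hw ((lit_mem_BF σ ch j' a').2 hne)
        subst ha
        simp
      | bv j' t =>
        simp only [rho] at hr
        injection hr with hr
        injection hr with hr
        subst hr
        simp
      | dv j' a' =>
        simp only [rho] at hr
        split_ifs at hr with h1 h2
        · injection hr with hr
          injection hr with hr
          subst hr; subst h1
          simp
        · injection hr with hr; exact nomatch hr
      | ev j' a' =>
        simp only [rho] at hr
        split_ifs at hr with h1 h2
        · injection hr with hr
          injection hr with hr
          subst hr; subst h1
          simp
        · injection hr with hr; exact nomatch hr
    · refine le_trans (Finset.card_union_le _ _) ?_
      have h1 : ({SatVert.lit j (ch j)} ∪ univ.image (SatVert.bv (n := n) j)).card ≤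
          1 + (n + 2 * m - 3) := by
        refine le_trans (Finset.card_union_le _ _) ?_
        have h0 : (univ.image (SatVert.bv (n := n) j)).card ≤ n + 2 * m - 3 := by
          refine le_trans Finset.card_image_le ?_
          simp
        simp only [Finset.card_singleton]
        omega
      have h2 : ({SatVert.dv j (ch j), SatVert.ev j (ch j)} : Finset (SatVert n m)).card ≤ 2 := by
        refine le_trans (Finset.card_insert_le _ _) ?_
        simp
      omega
  · -- pendant singleton region
    refine le_trans (ncard_le_finset _
      ({SatVert.dv j a, SatVert.ev j a} : Finset (SatVert n m)) ?_) ?_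
    · rintro w ⟨hw, hr⟩
      cases w with
      | var i' s => simp only [rho] at hr; exact nomatch hr
      | cv i' t => simp only [rho] at hr; exact nomatch hr
      | lit j' a' =>
        simp only [rho] at hr
        injection hr with hr; exact nomatch hr
      | bv j' t =>
        simp only [rho] at hr
        injection hr with hr; exact nomatch hr
      | dv j' a' =>
        simp only [rho] at hr
        split_ifs at hr with h1 h2
        · injection hr with hr; exact nomatch hr
        · injection hr with hr
          injection hr with hr
          injection hr with hr1 hr2
          subst hr1; subst hr2
          simp
      | ev j' a' =>
        simp only [rho] at hr
        split_ifs at hr with h1 h2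
        · injection hr with hr; exact nomatch hr
        · injection hr with hr
          injection hr with hr
          injection hr with hr1 hr2
          subst hr1; subst hr2
          simp
    · refine le_trans (Finset.card_insert_le _ _) ?_
      simp
      omega


variable (lit) in
lemma forward
    (hocc : ∀ p : Fin n × Bool,
      (Finset.univ.filter fun ja : Fin m × Fin 3 => lit ja.1 ja.2 = p).card = 2)
    (hk : 5 ≤ n + 2 * m)
    (hch : ∀ j, σ (lit j (ch j)).1 = (lit j (ch j)).2) :
    (BF σ ch).card ≤ n + 2 * m ∧
      SmallComponents (SimpleGraph.fromRel (satRel n m lit))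
        ((BF σ ch : Finset (SatVert n m)) : Set (SatVert n m)) (n + 2 * m) ∧
      ∀ v ∈ BF σ ch, (∃ i s, v = SatVert.var i s) ∨ (∃ j a, v = SatVert.lit j a) := by
  refine ⟨card_BF σ ch, ?_, fun v hv => mem_BF_shape σ ch hv⟩
  refine comp_bound (rho lit σ ch) ?_ ?_
  · intro v w hv hw hadj
    rw [Set.mem_compl_iff, Finset.mem_coe] at hv hw
    rw [SimpleGraph.fromRel_adj] at hadj
    rcases hadj.2 with h | h
    · exact rho_rel lit σ ch hch h hv hw
    · exact (rho_rel lit σ ch hch h hw hv).symm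
  · intro v hv
    exact rho_size lit σ ch hocc hk _


end Forward
section Backward
variable {n m : ℕ}

def Rfin (i : Fin n) : Finset (SatVert n m) :=
  {SatVert.var i true, SatVert.var i false} ∪ univ.image (SatVert.cv i)

def litFin (j : Fin m) : Finset (SatVert n m) := univ.image (SatVert.lit (n := n) j)

def bvFin (j : Fin m) : Finset (SatVert n m) := univ.image (SatVert.bv (n := n) j)

def Wfin (j : Fin m) : Finset (SatVert n m) := litFin j ∪ bvFin j

def Dfin (j : Fin m) : Finset (SatVert n m) :=
  univ.image (SatVert.dv (n := n) j) ∪ univ.image (SatVert.ev (n := n) j)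

def Sfin (j : Fin m) : Finset (SatVert n m) := Wfin j ∪ Dfin j

def Pfin (lit : Fin m → Fin 3 → Fin n × Bool) (i : Fin n) : Finset (SatVert n m) :=
  ((univ.filter fun ja : Fin m × Fin 3 => (lit ja.1 ja.2).1 = i).image
    fun ja => SatVert.dv ja.1 ja.2) ∪
  ((univ.filter fun ja : Fin m × Fin 3 => (lit ja.1 ja.2).1 = i).image
    fun ja => SatVert.ev ja.1 ja.2)

lemma mem_Rfin {i : Fin n} {v : SatVert n m} :
    v ∈ Rfin i ↔ (∃ s, v = SatVert.var i s) ∨ ∃ t, v = SatVert.cv i t := by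
  simp only [Rfin, Finset.mem_union, Finset.mem_insert, Finset.mem_singleton,
    Finset.mem_image, Finset.mem_univ, true_and]
  constructor
  · rintro ((rfl | rfl) | ⟨t, rfl⟩)
    · exact Or.inl ⟨true, rfl⟩
    · exact Or.inl ⟨false, rfl⟩
    · exact Or.inr ⟨t, rfl⟩
  · rintro (⟨s, rfl⟩ | ⟨t, rfl⟩)
    · cases s
      · exact Or.inl (Or.inr rfl)
      · exact Or.inl (Or.inl rfl)
    · exact Or.inr ⟨t, rfl⟩

lemma mem_litFin {j : Fin m} {v : SatVert n m} :
    v ∈ litFin j ↔ ∃ a, v = SatVert.lit j a := by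
  simp only [litFin, Finset.mem_image, Finset.mem_univ, true_and]
  exact ⟨fun ⟨a, h⟩ => ⟨a, h.symm⟩, fun ⟨a, h⟩ => ⟨a, h.symm⟩⟩

lemma mem_bvFin {j : Fin m} {v : SatVert n m} :
    v ∈ bvFin j ↔ ∃ t, v = SatVert.bv j t := by
  simp only [bvFin, Finset.mem_image, Finset.mem_univ, true_and]
  exact ⟨fun ⟨a, h⟩ => ⟨a, h.symm⟩, fun ⟨a, h⟩ => ⟨a, h.symm⟩⟩

lemma mem_Wfin {j : Fin m} {v : SatVert n m} :
    v ∈ Wfin j ↔ (∃ a, v = SatVert.lit j a) ∨ ∃ t, v = SatVert.bv j t := by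
  rw [Wfin, Finset.mem_union, mem_litFin, mem_bvFin]

lemma mem_Dfin {j : Fin m} {v : SatVert n m} :
    v ∈ Dfin j ↔ (∃ a, v = SatVert.dv j a) ∨ ∃ a, v = SatVert.ev j a := by
  simp only [Dfin, Finset.mem_union, Finset.mem_image, Finset.mem_univ, true_and]
  constructor
  · rintro (⟨a, rfl⟩ | ⟨a, rfl⟩)
    · exact Or.inl ⟨a, rfl⟩
    · exact Or.inr ⟨a, rfl⟩
  · rintro (⟨a, rfl⟩ | ⟨a, rfl⟩)
    · exact Or.inl ⟨a, rfl⟩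
    · exact Or.inr ⟨a, rfl⟩

lemma mem_Sfin {j : Fin m} {v : SatVert n m} :
    v ∈ Sfin j ↔ ((∃ a, v = SatVert.lit j a) ∨ ∃ t, v = SatVert.bv j t) ∨
      ((∃ a, v = SatVert.dv j a) ∨ ∃ a, v = SatVert.ev j a) := by
  rw [Sfin, Finset.mem_union, mem_Wfin, mem_Dfin]

lemma mem_Pfin {lit : Fin m → Fin 3 → Fin n × Bool} {i : Fin n} {v : SatVert n m} :
    v ∈ Pfin lit i ↔
      ∃ j a, (lit j a).1 = i ∧ (v = SatVert.dv j a ∨ v = SatVert.ev j a) := by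
  simp only [Pfin, Finset.mem_union, Finset.mem_image, Finset.mem_filter, Finset.mem_univ,
    true_and]
  constructor
  · rintro (⟨⟨j, a⟩, h1, rfl⟩ | ⟨⟨j, a⟩, h1, rfl⟩)
    · exact ⟨j, a, h1, Or.inl rfl⟩
    · exact ⟨j, a, h1, Or.inr rfl⟩
  · rintro ⟨j, a, h1, rfl | rfl⟩
    · exact Or.inl ⟨⟨j, a⟩, h1, rfl⟩
    · exact Or.inr ⟨⟨j, a⟩, h1, rfl⟩

lemma card_Rfin (i : Fin n) : (Rfin (m := m) i).card = 2 + (n + 2 * m - 5) := by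
  rw [Rfin, Finset.card_union_of_disjoint, Finset.card_image_of_injective]
  · rw [Finset.card_pair (by simp)]
    simp
  · intro a b h; injection h
  · rw [Finset.disjoint_left]
    intro v h hv
    rw [Finset.mem_insert, Finset.mem_singleton] at h
    rcases h with rfl | rfl <;>
    · rcases Finset.mem_image.1 hv with ⟨t, -, ht⟩
      exact nomatch ht

lemma card_litFin (j : Fin m) : (litFin (n := n) j).card = 3 := by
  rw [litFin, Finset.card_image_of_injective]
  · simp
  · intro a b h; injection h

lemma card_bvFin (j : Fin m) : (bvFin (n := n) j).card = n + 2 * m - 3 := by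
  rw [bvFin, Finset.card_image_of_injective]
  · simp
  · intro a b h; injection h

lemma disj_lit_bv (j : Fin m) : Disjoint (litFin (n := n) j) (bvFin (n := n) j) := by
  rw [Finset.disjoint_left]
  intro v hv hv'
  rcases mem_litFin.1 hv with ⟨a, rfl⟩
  rcases mem_bvFin.1 hv' with ⟨t, ht⟩
  exact nomatch ht

lemma card_Wfin (j : Fin m) : (Wfin (n := n) j).card = 3 + (n + 2 * m - 3) := by
  rw [Wfin, Finset.card_union_of_disjoint (disj_lit_bv j), card_litFin, card_bvFin]

lemma card_Dfin (j : Fin m) : (Dfin (n := n) j).card = 6 := by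
  rw [Dfin, Finset.card_union_of_disjoint, Finset.card_image_of_injective,
    Finset.card_image_of_injective]
  · simp
  · intro a b h; injection h
  · intro a b h; injection h
  · rw [Finset.disjoint_left]
    intro v hv hv'
    rcases Finset.mem_image.1 hv with ⟨a, -, rfl⟩
    rcases Finset.mem_image.1 hv' with ⟨b, -, hb⟩
    exact nomatch hb

lemma disj_W_D (j : Fin m) : Disjoint (Wfin (n := n) j) (Dfin (n := n) j) := by
  rw [Finset.disjoint_left]
  intro v hv hv'
  rcases mem_Wfin.1 hv with ⟨a, rfl⟩ | ⟨t, rfl⟩ <;>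
    rcases mem_Dfin.1 hv' with ⟨b, hb⟩ | ⟨b, hb⟩ <;> exact nomatch hb

lemma card_Pfin {lit : Fin m → Fin 3 → Fin n × Bool}
    (hocc : ∀ p : Fin n × Bool,
      (Finset.univ.filter fun ja : Fin m × Fin 3 => lit ja.1 ja.2 = p).card = 2)
    (i : Fin n) : (Pfin lit i).card = 8 := by
  have hfil : (univ.filter fun ja : Fin m × Fin 3 => (lit ja.1 ja.2).1 = i).card = 4 := by
    have hsplit : (univ.filter fun ja : Fin m × Fin 3 => (lit ja.1 ja.2).1 = i) =
        (univ.filter fun ja : Fin m × Fin 3 => lit ja.1 ja.2 = (i, true)) ∪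
        (univ.filter fun ja : Fin m × Fin 3 => lit ja.1 ja.2 = (i, false)) := by
      ext ja
      simp only [Finset.mem_filter, Finset.mem_union, Finset.mem_univ, true_and]
      constructor
      · intro h
        rcases hb : (lit ja.1 ja.2).2 with _ | _
        · exact Or.inr (by rw [Prod.ext_iff]; exact ⟨h, hb⟩)
        · exact Or.inl (by rw [Prod.ext_iff]; exact ⟨h, hb⟩)
      · rintro (h | h) <;> rw [h]
    rw [hsplit, Finset.card_union_of_disjoint, hocc, hocc]
    rw [Finset.disjoint_left]
    intro ja h1 h2
    rw [Finset.mem_filter] at h1 h2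
    rw [h1.2] at h2
    simpa using h2.2
  have hinj1 : Set.InjOn (fun ja : Fin m × Fin 3 => SatVert.dv (n := n) ja.1 ja.2)
      (univ.filter fun ja : Fin m × Fin 3 => (lit ja.1 ja.2).1 = i) := by
    rintro ⟨a, b⟩ - ⟨c, d⟩ - h
    injection h with h1 h2
    exact Prod.ext h1 h2
  have hinj2 : Set.InjOn (fun ja : Fin m × Fin 3 => SatVert.ev (n := n) ja.1 ja.2)
      (univ.filter fun ja : Fin m × Fin 3 => (lit ja.1 ja.2).1 = i) := by
    rintro ⟨a, b⟩ - ⟨c, d⟩ - h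
    injection h with h1 h2
    exact Prod.ext h1 h2
  rw [Pfin, Finset.card_union_of_disjoint, Finset.card_image_of_injOn hinj1,
    Finset.card_image_of_injOn hinj2, hfil]
  rw [Finset.disjoint_left]
  intro v hv hv'
  rcases Finset.mem_image.1 hv with ⟨ja, -, rfl⟩
  rcases Finset.mem_image.1 hv' with ⟨jb, -, hb⟩
  exact nomatch hb

def region : Fin n ⊕ Fin m → Finset (SatVert n m) := Sum.elim Rfin Sfin

lemma region_disjoint : ∀ t t' : Fin n ⊕ Fin m, t ≠ t' →
    Disjoint (region (n := n) (m := m) t) (region t') := by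
  have key : ∀ t t' : Fin n ⊕ Fin m, t ≠ t' → ∀ v, v ∈ region (n := n) (m := m) t →
      v ∉ region t' := by
    rintro (i | j) (i' | j') hne v hv hv'
    · rcases mem_Rfin.1 hv with ⟨s, rfl⟩ | ⟨t, rfl⟩ <;>
        rcases mem_Rfin.1 hv' with ⟨s', h'⟩ | ⟨t', h'⟩
      · injection h' with h1 h2; exact hne (by rw [h1])
      · exact nomatch h'
      · exact nomatch h'
      · injection h' with h1 h2; exact hne (by rw [h1])
    · rcases mem_Rfin.1 hv with ⟨s, rfl⟩ | ⟨t, rfl⟩ <;>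
        rcases mem_Sfin.1 hv' with (⟨a, h'⟩ | ⟨t', h'⟩) | (⟨a, h'⟩ | ⟨a, h'⟩) <;>
        exact nomatch h'
    · rcases mem_Rfin.1 hv' with ⟨s, h'⟩ | ⟨t, h'⟩ <;>
        rcases mem_Sfin.1 hv with (⟨a, rfl⟩ | ⟨t', rfl⟩) | (⟨a, rfl⟩ | ⟨a, rfl⟩) <;>
        exact nomatch h'
    · rcases mem_Sfin.1 hv with (⟨a, rfl⟩ | ⟨t, rfl⟩) | (⟨a, rfl⟩ | ⟨a, rfl⟩) <;>
        rcases mem_Sfin.1 hv' with (⟨a', h'⟩ | ⟨t', h'⟩) | (⟨a', h'⟩ | ⟨a', h'⟩) <;>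
        first
          | (cases h'; done)
          | (injection h' with h1 h2; exact hne (by rw [h1]))
  intro t t' hne
  rw [Finset.disjoint_left]
  exact fun v hv hv' => key t t' hne v hv hv'

lemma region_cover (v : SatVert n m) : ∃ t, v ∈ region (n := n) (m := m) t := by
  cases v with
  | var i s => exact ⟨Sum.inl i, mem_Rfin.2 (Or.inl ⟨s, rfl⟩)⟩
  | cv i t => exact ⟨Sum.inl i, mem_Rfin.2 (Or.inr ⟨t, rfl⟩)⟩
  | lit j a => exact ⟨Sum.inr j, mem_Sfin.2 (Or.inl (Or.inl ⟨a, rfl⟩))⟩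
  | bv j t => exact ⟨Sum.inr j, mem_Sfin.2 (Or.inl (Or.inr ⟨t, rfl⟩))⟩
  | dv j a => exact ⟨Sum.inr j, mem_Sfin.2 (Or.inr (Or.inl ⟨a, rfl⟩))⟩
  | ev j a => exact ⟨Sum.inr j, mem_Sfin.2 (Or.inr (Or.inr ⟨a, rfl⟩))⟩

lemma budget (B : Finset (SatVert n m)) :
    ∑ i : Fin n, (B ∩ Rfin i).card + ∑ j : Fin m, (B ∩ Sfin j).card = B.card := by
  have hB : B = univ.biUnion (fun t : Fin n ⊕ Fin m => B ∩ region t) := by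
    ext v
    simp only [Finset.mem_biUnion, Finset.mem_univ, true_and, Finset.mem_inter]
    constructor
    · intro hv
      obtain ⟨t, ht⟩ := region_cover v
      exact ⟨t, hv, ht⟩
    · rintro ⟨t, hv, -⟩; exact hv
  conv_rhs => rw [hB]
  rw [Finset.card_biUnion]
  · rw [Fintype.sum_sum_type]
    rfl
  · rintro t - t' - hne
    exact Finset.disjoint_of_subset_left Finset.inter_subset_right
      (Finset.disjoint_of_subset_right Finset.inter_subset_right (region_disjoint t t' hne))

lemma sum_d_eq (B : Finset (SatVert n m)) :
    ∑ j : Fin m, (B ∩ Dfin j).card = (B ∩ univ.biUnion (Dfin (n := n))).card := by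
  have : B ∩ univ.biUnion (Dfin (n := n)) =
      univ.biUnion (fun j : Fin m => B ∩ Dfin j) := by
    ext v
    simp only [Finset.mem_inter, Finset.mem_biUnion, Finset.mem_univ, true_and]
    tauto
  rw [this, Finset.card_biUnion]
  rintro t - t' - hne
  refine Finset.disjoint_of_subset_left Finset.inter_subset_right
    (Finset.disjoint_of_subset_right Finset.inter_subset_right ?_)
  rw [Finset.disjoint_left]
  intro v hv hv'
  rcases mem_Dfin.1 hv with ⟨a, rfl⟩ | ⟨a, rfl⟩ <;>
    rcases mem_Dfin.1 hv' with ⟨a', h'⟩ | ⟨a', h'⟩ <;>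
    first
      | (cases h'; done)
      | (injection h' with h1 h2; exact hne (by rw [h1]))

lemma Pfin_disjoint {lit : Fin m → Fin 3 → Fin n × Bool} {i i' : Fin n} (hne : i ≠ i') :
    Disjoint (Pfin lit i) (Pfin lit i') := by
  rw [Finset.disjoint_left]
  intro v hv hv'
  rcases mem_Pfin.1 hv with ⟨j, a, h1, rfl | rfl⟩ <;>
    rcases mem_Pfin.1 hv' with ⟨j', a', h1', h' | h'⟩ <;>
    first
      | (cases h'; done)
      | (injection h' with hj ha; exact hne (by rw [← h1, ← h1', hj, ha]))

lemma sum_pend_le {lit : Fin m → Fin 3 → Fin n × Bool} (B : Finset (SatVert n m))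
    (Z : Finset (Fin n)) :
    ∑ i ∈ Z, (B ∩ Pfin lit i).card ≤ (B ∩ univ.biUnion (Dfin (n := n))).card := by
  have h1 : Z.biUnion (fun i => B ∩ Pfin lit i) ⊆ B ∩ univ.biUnion (Dfin (n := n)) := by
    intro v hv
    rcases Finset.mem_biUnion.1 hv with ⟨i, -, hv⟩
    rw [Finset.mem_inter] at hv ⊢
    refine ⟨hv.1, ?_⟩
    rcases mem_Pfin.1 hv.2 with ⟨j, a, -, rfl | rfl⟩
    · exact Finset.mem_biUnion.2 ⟨j, Finset.mem_univ _, mem_Dfin.2 (Or.inl ⟨a, rfl⟩)⟩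
    · exact Finset.mem_biUnion.2 ⟨j, Finset.mem_univ _, mem_Dfin.2 (Or.inr ⟨a, rfl⟩)⟩
  calc ∑ i ∈ Z, (B ∩ Pfin lit i).card
      = (Z.biUnion (fun i => B ∩ Pfin lit i)).card := by
        rw [Finset.card_biUnion]
        intro t ht t' ht' hne
        exact Finset.disjoint_of_subset_left Finset.inter_subset_right
          (Finset.disjoint_of_subset_right Finset.inter_subset_right (Pfin_disjoint hne))
    _ ≤ _ := Finset.card_le_card h1

lemma card_S_eq (B : Finset (SatVert n m)) (j : Fin m) :
    (B ∩ Sfin j).card = (B ∩ Wfin j).card + (B ∩ Dfin j).card := by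
  rw [Sfin, Finset.inter_union_distrib_left, Finset.card_union_of_disjoint]
  exact Finset.disjoint_of_subset_left Finset.inter_subset_right
    (Finset.disjoint_of_subset_right Finset.inter_subset_right (disj_W_D j))

end Backward

lemma le_of_subset_component {V : Type*} [Fintype V] {G : SimpleGraph V} {B : Set V} {k : ℕ}
    (hsc : SmallComponents G B k) (S : Finset V) (hub : V) (hhub : hub ∈ Bᶜ)
    (hS : ∀ v ∈ S, ∃ hv : v ∈ Bᶜ, (G.induce Bᶜ).Reachable ⟨hub, hhub⟩ ⟨v, hv⟩) :
    S.card ≤ k := by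
  have h1 : (S : Set V) ⊆
      Subtype.val '' ((G.induce Bᶜ).connectedComponentMk ⟨hub, hhub⟩).supp := by
    intro v hv
    obtain ⟨hv', hr⟩ := hS v (by exact_mod_cast hv)
    refine ⟨⟨v, hv'⟩, ?_, rfl⟩
    rw [SimpleGraph.ConnectedComponent.mem_supp_iff]
    exact SimpleGraph.ConnectedComponent.eq.mpr hr.symm
  calc S.card = (S : Set V).ncard := (Set.ncard_coe_finset S).symm
    _ ≤ (Subtype.val '' ((G.induce Bᶜ).connectedComponentMk ⟨hub, hhub⟩).supp).ncard :=
        Set.ncard_le_ncard h1 (Set.toFinite _)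
    _ = ((G.induce Bᶜ).connectedComponentMk ⟨hub, hhub⟩).supp.ncard :=
        Set.ncard_image_of_injective _ Subtype.val_injective
    _ ≤ k := hsc _

lemma reach_succ {V : Type*} {G : SimpleGraph V} {B : Set V} {hub v w : V} (hhub : hub ∈ Bᶜ)
    (hv : v ∈ Bᶜ) (hw : w ∈ Bᶜ) (h : G.Adj v w)
    (hr : (G.induce Bᶜ).Reachable ⟨hub, hhub⟩ ⟨v, hv⟩) :
    (G.induce Bᶜ).Reachable ⟨hub, hhub⟩ ⟨w, hw⟩ :=
  hr.trans (SimpleGraph.Adj.reachable (by exact h))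

section Reach
variable {n m : ℕ} {lit : Fin m → Fin 3 → Fin n × Bool} {B : Finset (SatVert n m)}

lemma compl_of {v : SatVert n m} (h : v ∉ B) : v ∈ ((B : Set (SatVert n m)))ᶜ :=
  fun hv => h (Finset.mem_coe.1 hv)

variable (lit) in
lemma reach_clause (j : Fin m) (t0 : Fin (n + 2 * m - 3)) (ℓ : Fin 3)
    (hhub : SatVert.bv j t0 ∉ B) (hl : SatVert.lit j ℓ ∉ B)
    {v : SatVert n m} (hv : v ∉ B)
    (hmem : v ∈ Wfin j ∨
      ∃ a, (v = SatVert.dv j a ∨ v = SatVert.ev j a) ∧ SatVert.lit j a ∉ B) :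
    ∃ hv' : v ∈ ((B : Set (SatVert n m)))ᶜ,
      ((SimpleGraph.fromRel (satRel n m lit)).induce ((B : Set (SatVert n m)))ᶜ).Reachable
        ⟨SatVert.bv j t0, compl_of hhub⟩ ⟨v, hv'⟩ := by
  refine ⟨compl_of hv, ?_⟩
  have r0 : ((SimpleGraph.fromRel (satRel n m lit)).induce ((B : Set (SatVert n m)))ᶜ).Reachable
      ⟨SatVert.bv j t0, compl_of hhub⟩ ⟨SatVert.bv j t0, compl_of hhub⟩ := SimpleGraph.Reachable.refl _
  have rlit : ∀ (a : Fin 3) (ha : SatVert.lit j a ∉ B),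
      ((SimpleGraph.fromRel (satRel n m lit)).induce ((B : Set (SatVert n m)))ᶜ).Reachable
        ⟨SatVert.bv j t0, compl_of hhub⟩ ⟨SatVert.lit j a, compl_of ha⟩ := by
    intro a ha
    exact reach_succ _ _ _ (adj_bv_lit j t0 a) r0
  rcases hmem with hmem | ⟨a, hform, hla⟩
  · rcases mem_Wfin.1 hmem with ⟨a, rfl⟩ | ⟨t, rfl⟩
    · exact rlit a hv
    · exact reach_succ _ _ _ (adj_bv_lit j t ℓ).symm (rlit ℓ hl)
  · rcases hform with rfl | rfl
    · exact reach_succ _ _ _ (adj_dv_lit j a).symm (rlit a hla)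
    · exact reach_succ _ _ _ (adj_ev_lit j a).symm (rlit a hla)

variable (lit) in
lemma reach_var (i : Fin n) (hR : ∀ v ∈ Rfin (m := m) i, v ∉ B) (hk : 11 ≤ n + 2 * m)
    {v : SatVert n m} (hv : v ∉ B)
    (hmem : v ∈ Rfin i ∨
      ∃ j a, (lit j a).1 = i ∧ (v = SatVert.dv j a ∨ v = SatVert.ev j a)) :
    ∃ (hh : SatVert.var i true ∉ B) (hv' : v ∈ ((B : Set (SatVert n m)))ᶜ),
      ((SimpleGraph.fromRel (satRel n m lit)).induce ((B : Set (SatVert n m)))ᶜ).Reachable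
        ⟨SatVert.var i true, compl_of hh⟩ ⟨v, hv'⟩ := by
  have hh : SatVert.var i true ∉ B := hR _ (mem_Rfin.2 (Or.inl ⟨true, rfl⟩))
  refine ⟨hh, compl_of hv, ?_⟩
  have hc0 : (0 : ℕ) < n + 2 * m - 5 := by omega
  set c0 : SatVert n m := SatVert.cv i ⟨0, hc0⟩ with hc0def
  have hc0B : c0 ∉ B := hR _ (mem_Rfin.2 (Or.inr ⟨⟨0, hc0⟩, rfl⟩))
  have r0 := SimpleGraph.Reachable.refl
    (G := (SimpleGraph.fromRel (satRel n m lit)).induce ((B : Set (SatVert n m)))ᶜ)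
    ⟨SatVert.var i true, compl_of hh⟩
  have rc0 : ((SimpleGraph.fromRel (satRel n m lit)).induce ((B : Set (SatVert n m)))ᶜ).Reachable
      ⟨SatVert.var i true, compl_of hh⟩ ⟨c0, compl_of hc0B⟩ :=
    reach_succ _ _ _ (adj_cv_var i ⟨0, hc0⟩ true).symm r0
  have rvar : ∀ (s : Bool) (hs : SatVert.var i s ∉ B),
      ((SimpleGraph.fromRel (satRel n m lit)).induce ((B : Set (SatVert n m)))ᶜ).Reachable
        ⟨SatVert.var i true, compl_of hh⟩ ⟨SatVert.var i s, compl_of hs⟩ := by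
    intro s hs
    exact reach_succ _ _ _ (adj_cv_var i ⟨0, hc0⟩ s) rc0
  rcases hmem with hmem | ⟨j, a, h1, hform⟩
  · rcases mem_Rfin.1 hmem with ⟨s, rfl⟩ | ⟨t, rfl⟩
    · exact rvar s hv
    · exact reach_succ _ _ _ (adj_cv_var i t true).symm r0
  · have hvB : SatVert.var i (lit j a).2 ∉ B := hR _ (mem_Rfin.2 (Or.inl ⟨_, rfl⟩))
    have hadj1 : (SimpleGraph.fromRel (satRel n m lit)).Adj (SatVert.dv j a)
        (SatVert.var i (lit j a).2) := by
      rw [← h1]; exact adj_dv_var j a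
    have hadj2 : (SimpleGraph.fromRel (satRel n m lit)).Adj (SatVert.ev j a)
        (SatVert.var i (lit j a).2) := by
      rw [← h1]; exact adj_ev_var j a
    rcases hform with rfl | rfl
    · exact reach_succ _ _ _ hadj1.symm (rvar _ hvB)
    · exact reach_succ _ _ _ hadj2.symm (rvar _ hvB)

end Reach

section KeyLemmas
variable {n m : ℕ} {lit : Fin m → Fin 3 → Fin n × Bool} {B : Finset (SatVert n m)}

lemma exists_bv (j : Fin m) (hk : 11 ≤ n + 2 * m) (hw : (B ∩ Wfin j).card ≤ 2) :
    ∃ t0, SatVert.bv (n := n) j t0 ∉ B := by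
  by_contra hcon
  push_neg at hcon
  have hsub : bvFin (n := n) j ⊆ B ∩ Wfin j := by
    intro v hv
    rcases mem_bvFin.1 hv with ⟨t, rfl⟩
    exact Finset.mem_inter.2 ⟨hcon t, mem_Wfin.2 (Or.inr ⟨t, rfl⟩)⟩
  have := Finset.card_le_card hsub
  rw [card_bvFin] at this
  omega

variable (lit B) in
lemma lemA {j : Fin m}
    (hsc : SmallComponents (SimpleGraph.fromRel (satRel n m lit))
      ((B : Finset (SatVert n m)) : Set (SatVert n m)) (n + 2 * m))
    (hk : 11 ≤ n + 2 * m) (hw : (B ∩ Wfin j).card = 0) :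
    (B ∩ Dfin j).card = 6 := by
  have hWB : ∀ v ∈ Wfin (n := n) j, v ∉ B := by
    intro v hvW hvB
    have : v ∈ B ∩ Wfin j := Finset.mem_inter.2 ⟨hvB, hvW⟩
    rw [Finset.card_eq_zero.1 hw] at this
    exact absurd this (Finset.notMem_empty v)
  have hsub : Dfin (n := n) j ⊆ B := by
    intro p hp
    by_contra hpB
    obtain ⟨t0, ht0⟩ := exists_bv (B := B) j hk (by omega)
    have hl : SatVert.lit (n := n) j 0 ∉ B := hWB _ (mem_Wfin.2 (Or.inl ⟨0, rfl⟩))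
    have hpW : p ∉ Wfin (n := n) j := by
      intro hpW
      exact Finset.disjoint_left.1 (disj_W_D j) hpW hp
    have hcard : (Wfin (n := n) j ∪ {p}).card = (3 + (n + 2 * m - 3)) + 1 := by
      rw [Finset.card_union_of_disjoint (by simpa using hpW), card_Wfin,
        Finset.card_singleton]
    have hle := le_of_subset_component hsc (Wfin (n := n) j ∪ {p}) (SatVert.bv j t0)
      (compl_of ht0) ?_
    · omega
    · intro v hvS
      rcases Finset.mem_union.1 hvS with hvW | hvp
      · exact reach_clause lit j t0 0 ht0 hl (hWB _ hvW) (Or.inl hvW)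
      · rw [Finset.mem_singleton] at hvp
        subst hvp
        rcases mem_Dfin.1 hp with ⟨a, rfl⟩ | ⟨a, rfl⟩
        · exact reach_clause lit j t0 0 ht0 hl hpB
            (Or.inr ⟨a, Or.inl rfl, hWB _ (mem_Wfin.2 (Or.inl ⟨a, rfl⟩))⟩)
        · exact reach_clause lit j t0 0 ht0 hl hpB
            (Or.inr ⟨a, Or.inr rfl, hWB _ (mem_Wfin.2 (Or.inl ⟨a, rfl⟩))⟩)
  rw [(Finset.inter_eq_right).2 hsub, card_Dfin]

variable (lit B) in
lemma lemB {j : Fin m}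
    (hsc : SmallComponents (SimpleGraph.fromRel (satRel n m lit))
      ((B : Finset (SatVert n m)) : Set (SatVert n m)) (n + 2 * m))
    (hk : 11 ≤ n + 2 * m) (hw : (B ∩ Wfin j).card = 1) :
    3 ≤ (B ∩ Dfin j).card := by
  obtain ⟨u, hu⟩ := Finset.card_eq_one.1 hw
  have huBW : u ∈ B ∧ u ∈ Wfin (n := n) j := by
    have : u ∈ B ∩ Wfin j := hu ▸ Finset.mem_singleton_self u
    exact Finset.mem_inter.1 this
  have hWB : ∀ v ∈ Wfin (n := n) j, v ≠ u → v ∉ B := by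
    intro v hvW hne hvB
    have : v ∈ B ∩ Wfin j := Finset.mem_inter.2 ⟨hvB, hvW⟩
    rw [hu, Finset.mem_singleton] at this
    exact hne this
  obtain ⟨t0, ht0⟩ := exists_bv (B := B) j hk (by omega)
  have hWsd : (Wfin (n := n) j \ B).card = (3 + (n + 2 * m - 3)) - 1 := by
    have := Finset.card_inter_add_card_sdiff (Wfin (n := n) j) B
    rw [Finset.inter_comm] at this
    rw [card_Wfin] at this
    omega
  rcases mem_Wfin.1 huBW.2 with ⟨a0, hu0⟩ | ⟨tu, hu0⟩
  · -- deleted vertex is a literal vertex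
    subst hu0
    have hl : SatVert.lit (n := n) j (a0 + 1) ∉ B := by
      refine hWB _ (mem_Wfin.2 (Or.inl ⟨_, rfl⟩)) ?_
      intro h
      injection h with h1 h2
      exact fin3_add1 a0 h2
    set Gd : Finset (SatVert n m) :=
      ((univ.erase a0).image fun a => SatVert.dv j a) ∪
        ((univ.erase a0).image fun a => SatVert.ev j a) with hGddef
    have hGdD : Gd ⊆ Dfin (n := n) j := by
      intro v hv
      rcases Finset.mem_union.1 hv with hv | hv
      · rcases Finset.mem_image.1 hv with ⟨a, -, rfl⟩
        exact mem_Dfin.2 (Or.inl ⟨a, rfl⟩)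
      · rcases Finset.mem_image.1 hv with ⟨a, -, rfl⟩
        exact mem_Dfin.2 (Or.inr ⟨a, rfl⟩)
    have hGdcard : Gd.card = 4 := by
      have e1 : (univ.erase a0).card = 2 := by
        rw [Finset.card_erase_of_mem (Finset.mem_univ _)]
        simp
      have c1 : ((univ.erase a0).image fun a => SatVert.dv (n := n) j a).card = 2 := by
        rw [Finset.card_image_of_injective _
          (fun a b h => by injection h), e1]
      have c2 : ((univ.erase a0).image fun a => SatVert.ev (n := n) j a).card = 2 := by
        rw [Finset.card_image_of_injective _
          (fun a b h => by injection h), e1]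
      have hd : Disjoint ((univ.erase a0).image fun a => SatVert.dv (n := n) j a)
          ((univ.erase a0).image fun a => SatVert.ev (n := n) j a) := by
        rw [Finset.disjoint_left]
        intro v hv hv'
        rcases Finset.mem_image.1 hv with ⟨a, -, rfl⟩
        rcases Finset.mem_image.1 hv' with ⟨b, -, hb⟩
        exact nomatch hb
      rw [hGddef, Finset.card_union_of_disjoint hd, c1, c2]
    have hGsd : (Gd ∩ B).card + (Gd \ B).card = 4 := by
      rw [← hGdcard]; exact Finset.card_inter_add_card_sdiff Gd B
    have hdisj : Disjoint (Wfin (n := n) j \ B) (Gd \ B) :=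
      Finset.disjoint_of_subset_left Finset.sdiff_subset
        (Finset.disjoint_of_subset_right (Finset.sdiff_subset.trans hGdD) (disj_W_D j))
    have hle := le_of_subset_component hsc ((Wfin (n := n) j \ B) ∪ (Gd \ B))
      (SatVert.bv j t0) (compl_of ht0) ?_
    · rw [Finset.card_union_of_disjoint hdisj, hWsd] at hle
      have hsub2 : Gd ∩ B ⊆ B ∩ Dfin j := by
        intro v hv
        rw [Finset.mem_inter] at hv ⊢
        exact ⟨hv.2, hGdD hv.1⟩
      have := Finset.card_le_card hsub2
      omega
    · intro v hvS
      rcases Finset.mem_union.1 hvS with hv | hv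
      · rw [Finset.mem_sdiff] at hv
        exact reach_clause lit j t0 (a0 + 1) ht0 hl hv.2 (Or.inl hv.1)
      · rw [Finset.mem_sdiff] at hv
        obtain ⟨hvG, hvB⟩ := hv
        rcases Finset.mem_union.1 hvG with hv | hv
        · rcases Finset.mem_image.1 hv with ⟨a, ha, rfl⟩
          have hane : a ≠ a0 := Finset.ne_of_mem_erase ha
          have hla : SatVert.lit (n := n) j a ∉ B := by
            refine hWB _ (mem_Wfin.2 (Or.inl ⟨a, rfl⟩)) ?_
            intro h; injection h with h1 h2; exact hane h2
          exact reach_clause lit j t0 (a0 + 1) ht0 hl hvB (Or.inr ⟨a, Or.inl rfl, hla⟩)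
        · rcases Finset.mem_image.1 hv with ⟨a, ha, rfl⟩
          have hane : a ≠ a0 := Finset.ne_of_mem_erase ha
          have hla : SatVert.lit (n := n) j a ∉ B := by
            refine hWB _ (mem_Wfin.2 (Or.inl ⟨a, rfl⟩)) ?_
            intro h; injection h with h1 h2; exact hane h2
          exact reach_clause lit j t0 (a0 + 1) ht0 hl hvB (Or.inr ⟨a, Or.inr rfl, hla⟩)
  · -- deleted vertex is a b-vertex
    subst hu0
    have hlall : ∀ a : Fin 3, SatVert.lit (n := n) j a ∉ B := by
      intro a
      exact hWB _ (mem_Wfin.2 (Or.inl ⟨a, rfl⟩)) (fun h => nomatch h)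
    have hDsd : (B ∩ Dfin j).card + (Dfin (n := n) j \ B).card = 6 := by
      have := Finset.card_inter_add_card_sdiff (Dfin (n := n) j) B
      rw [Finset.inter_comm] at this
      rw [card_Dfin] at this
      omega
    have hdisj : Disjoint (Wfin (n := n) j \ B) (Dfin (n := n) j \ B) :=
      Finset.disjoint_of_subset_left Finset.sdiff_subset
        (Finset.disjoint_of_subset_right Finset.sdiff_subset (disj_W_D j))
    have hle := le_of_subset_component hsc
      ((Wfin (n := n) j \ B) ∪ (Dfin (n := n) j \ B))
      (SatVert.bv j t0) (compl_of ht0) ?_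
    · rw [Finset.card_union_of_disjoint hdisj, hWsd] at hle
      omega
    · intro v hvS
      rcases Finset.mem_union.1 hvS with hv | hv
      · rw [Finset.mem_sdiff] at hv
        exact reach_clause lit j t0 0 ht0 (hlall 0) hv.2 (Or.inl hv.1)
      · rw [Finset.mem_sdiff] at hv
        obtain ⟨hvD, hvB⟩ := hv
        rcases mem_Dfin.1 hvD with ⟨a, rfl⟩ | ⟨a, rfl⟩
        · exact reach_clause lit j t0 0 ht0 (hlall 0) hvB (Or.inr ⟨a, Or.inl rfl, hlall a⟩)
        · exact reach_clause lit j t0 0 ht0 (hlall 0) hvB (Or.inr ⟨a, Or.inr rfl, hlall a⟩)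

end KeyLemmas

section KeyLemmas2
variable {n m : ℕ} {lit : Fin m → Fin 3 → Fin n × Bool} {B : Finset (SatVert n m)}

lemma exists_lit (j : Fin m) (hl : (B ∩ litFin j).card ≤ 2) :
    ∃ a, SatVert.lit (n := n) j a ∉ B := by
  by_contra hcon
  push_neg at hcon
  have hsub : litFin (n := n) j ⊆ B ∩ litFin j := by
    intro v hv
    rcases mem_litFin.1 hv with ⟨a, rfl⟩
    exact Finset.mem_inter.2 ⟨hcon a, hv⟩
  have := Finset.card_le_card hsub
  rw [card_litFin] at this
  omega

variable (lit B) in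
lemma lemC {j : Fin m}
    (hsc : SmallComponents (SimpleGraph.fromRel (satRel n m lit))
      ((B : Finset (SatVert n m)) : Set (SatVert n m)) (n + 2 * m))
    (hk : 11 ≤ n + 2 * m) (hw : (B ∩ Wfin j).card = 2) (hd : (B ∩ Dfin j).card = 0) :
    ∃ a, SatVert.lit (n := n) j a ∉ B ∧
      SatVert.var (lit j a).1 (lit j a).2 ∈ B := by
  have hDB : ∀ v ∈ Dfin (n := n) j, v ∉ B := by
    intro v hvD hvB
    have : v ∈ B ∩ Dfin j := Finset.mem_inter.2 ⟨hvB, hvD⟩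
    rw [Finset.card_eq_zero.1 hd] at this
    exact absurd this (Finset.notMem_empty v)
  obtain ⟨t0, ht0⟩ := exists_bv (B := B) j hk (by omega)
  have hWsplit : (B ∩ Wfin j).card = (B ∩ litFin j).card + (B ∩ bvFin j).card := by
    rw [Wfin, Finset.inter_union_distrib_left, Finset.card_union_of_disjoint]
    exact Finset.disjoint_of_subset_left Finset.inter_subset_right
      (Finset.disjoint_of_subset_right Finset.inter_subset_right (disj_lit_bv j))
  -- Step 1: no b-vertex of clause j is in B
  have hbvB : (B ∩ bvFin j).card = 0 := by
    by_contra hbv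
    have hlitle : (B ∩ litFin j).card ≤ 1 := by omega
    have hlsd : (litFin (n := n) j \ B).card = 3 - (B ∩ litFin j).card := by
      have := Finset.card_inter_add_card_sdiff (litFin (n := n) j) B
      rw [Finset.inter_comm] at this
      rw [card_litFin] at this
      omega
    set GdSet : Finset (Fin 3) := univ.filter (fun a => SatVert.lit (n := n) j a ∉ B)
      with hGdSetdef
    have hGdSetcard : 2 ≤ GdSet.card := by
      have himg : litFin (n := n) j \ B = GdSet.image (SatVert.lit j) := by
        ext v
        rw [Finset.mem_sdiff, Finset.mem_image]
        constructor
        · rintro ⟨hvl, hvB⟩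
          rcases mem_litFin.1 hvl with ⟨a, rfl⟩
          exact ⟨a, Finset.mem_filter.2 ⟨Finset.mem_univ _, hvB⟩, rfl⟩
        · rintro ⟨a, ha, rfl⟩
          exact ⟨mem_litFin.2 ⟨a, rfl⟩, (Finset.mem_filter.1 ha).2⟩
      have := Finset.card_image_of_injective GdSet
        (fun a b h => by injection h : Function.Injective (SatVert.lit (n := n) j))
      rw [← himg] at this
      omega
    set Gd : Finset (SatVert n m) :=
      GdSet.image (SatVert.dv j) ∪ GdSet.image (SatVert.ev j) with hGddef
    have hGdD : Gd ⊆ Dfin (n := n) j := by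
      intro v hv
      rcases Finset.mem_union.1 hv with hv | hv
      · rcases Finset.mem_image.1 hv with ⟨a, -, rfl⟩
        exact mem_Dfin.2 (Or.inl ⟨a, rfl⟩)
      · rcases Finset.mem_image.1 hv with ⟨a, -, rfl⟩
        exact mem_Dfin.2 (Or.inr ⟨a, rfl⟩)
    have hGdcard : Gd.card = 2 * GdSet.card := by
      rw [hGddef, Finset.card_union_of_disjoint, Finset.card_image_of_injective _
        (fun a b h => by injection h), Finset.card_image_of_injective _
        (fun a b h => by injection h)]
      · omega
      · rw [Finset.disjoint_left]
        intro v hv hv'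
        rcases Finset.mem_image.1 hv with ⟨a, -, rfl⟩
        rcases Finset.mem_image.1 hv' with ⟨b, -, hb⟩
        exact nomatch hb
    have hWsd : (Wfin (n := n) j \ B).card = (3 + (n + 2 * m - 3)) - 2 := by
      have := Finset.card_inter_add_card_sdiff (Wfin (n := n) j) B
      rw [Finset.inter_comm] at this
      rw [card_Wfin] at this
      omega
    obtain ⟨ℓ, hℓ⟩ := exists_lit (B := B) j (by omega)
    have hdisj : Disjoint (Wfin (n := n) j \ B) Gd :=
      Finset.disjoint_of_subset_left Finset.sdiff_subset
        (Finset.disjoint_of_subset_right hGdD (disj_W_D j))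
    have hle := le_of_subset_component hsc ((Wfin (n := n) j \ B) ∪ Gd)
      (SatVert.bv j t0) (compl_of ht0) ?_
    · rw [Finset.card_union_of_disjoint hdisj, hWsd, hGdcard] at hle
      omega
    · intro v hvS
      rcases Finset.mem_union.1 hvS with hv | hv
      · rw [Finset.mem_sdiff] at hv
        exact reach_clause lit j t0 ℓ ht0 hℓ hv.2 (Or.inl hv.1)
      · have hvB : v ∉ B := hDB _ (hGdD hv)
        rcases Finset.mem_union.1 hv with hv | hv
        · rcases Finset.mem_image.1 hv with ⟨a, ha, rfl⟩
          exact reach_clause lit j t0 ℓ ht0 hℓ hvB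
            (Or.inr ⟨a, Or.inl rfl, (Finset.mem_filter.1 ha).2⟩)
        · rcases Finset.mem_image.1 hv with ⟨a, ha, rfl⟩
          exact reach_clause lit j t0 ℓ ht0 hℓ hvB
            (Or.inr ⟨a, Or.inr rfl, (Finset.mem_filter.1 ha).2⟩)
  -- Step 2: there is a surviving literal vertex
  obtain ⟨a3, ha3⟩ := exists_lit (B := B) j (by omega)
  -- Step 3: its variable vertex must be in B
  by_contra hcon
  push_neg at hcon
  have hvar : SatVert.var (lit j a3).1 (lit j a3).2 ∉ B := hcon a3 ha3
  have hdv : SatVert.dv (n := n) j a3 ∉ B := hDB _ (mem_Dfin.2 (Or.inl ⟨a3, rfl⟩))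
  have hev : SatVert.ev (n := n) j a3 ∉ B := hDB _ (mem_Dfin.2 (Or.inr ⟨a3, rfl⟩))
  set T : Finset (SatVert n m) :=
    {SatVert.dv j a3, SatVert.ev j a3, SatVert.var (lit j a3).1 (lit j a3).2} with hTdef
  have hTcard : T.card = 3 := by
    rw [hTdef]
    rw [Finset.card_insert_of_notMem, Finset.card_insert_of_notMem, Finset.card_singleton]
    · intro h
      rw [Finset.mem_singleton] at h
      exact nomatch h
    · intro h
      rw [Finset.mem_insert, Finset.mem_singleton] at h
      rcases h with h | h <;> exact nomatch h
  have hTW : Disjoint (Wfin (n := n) j \ B) T := by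
    rw [Finset.disjoint_right]
    intro v hv hv'
    rw [Finset.mem_sdiff] at hv'
    rw [hTdef, Finset.mem_insert, Finset.mem_insert, Finset.mem_singleton] at hv
    rcases mem_Wfin.1 hv'.1 with ⟨a, ha⟩ | ⟨t, ht⟩ <;>
      rcases hv with rfl | rfl | rfl <;>
      first
        | exact nomatch ha
        | exact nomatch ht
  have hWsd : (Wfin (n := n) j \ B).card = (3 + (n + 2 * m - 3)) - 2 := by
    have := Finset.card_inter_add_card_sdiff (Wfin (n := n) j) B
    rw [Finset.inter_comm] at this
    rw [card_Wfin] at this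
    omega
  have hle := le_of_subset_component hsc ((Wfin (n := n) j \ B) ∪ T)
    (SatVert.bv j t0) (compl_of ht0) ?_
  · rw [Finset.card_union_of_disjoint hTW, hWsd, hTcard] at hle
    omega
  · intro v hvS
    rcases Finset.mem_union.1 hvS with hv | hv
    · rw [Finset.mem_sdiff] at hv
      exact reach_clause lit j t0 a3 ht0 ha3 hv.2 (Or.inl hv.1)
    · rw [hTdef, Finset.mem_insert, Finset.mem_insert, Finset.mem_singleton] at hv
      rcases hv with rfl | rfl | rfl
      · exact reach_clause lit j t0 a3 ht0 ha3 hdv (Or.inr ⟨a3, Or.inl rfl, ha3⟩)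
      · exact reach_clause lit j t0 a3 ht0 ha3 hev (Or.inr ⟨a3, Or.inr rfl, ha3⟩)
      · obtain ⟨hdv', hr⟩ := reach_clause lit j t0 a3 ht0 ha3 hdv
          (Or.inr ⟨a3, Or.inl rfl, ha3⟩)
        exact ⟨compl_of hvar, reach_succ _ _ _ (adj_dv_var j a3) hr⟩

variable (lit B) in
lemma lemVar {i : Fin n}
    (hocc : ∀ p : Fin n × Bool,
      (Finset.univ.filter fun ja : Fin m × Fin 3 => lit ja.1 ja.2 = p).card = 2)
    (hsc : SmallComponents (SimpleGraph.fromRel (satRel n m lit))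
      ((B : Finset (SatVert n m)) : Set (SatVert n m)) (n + 2 * m))
    (hk : 11 ≤ n + 2 * m) (hr : (B ∩ Rfin i).card = 0) :
    5 ≤ (B ∩ Pfin lit i).card := by
  have hRB : ∀ v ∈ Rfin (m := m) i, v ∉ B := by
    intro v hvR hvB
    have : v ∈ B ∩ Rfin i := Finset.mem_inter.2 ⟨hvB, hvR⟩
    rw [Finset.card_eq_zero.1 hr] at this
    exact absurd this (Finset.notMem_empty v)
  have hdisj : Disjoint (Rfin (m := m) i) (Pfin lit i \ B) := by
    rw [Finset.disjoint_left]
    intro v hv hv'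
    have hv'' := (Finset.mem_sdiff.1 hv').1
    rcases mem_Pfin.1 hv'' with ⟨j, a, -, h | h⟩ <;>
      rcases mem_Rfin.1 hv with ⟨s, rfl⟩ | ⟨t, rfl⟩ <;> exact nomatch h
  have hPsd : (B ∩ Pfin lit i).card + (Pfin lit i \ B).card = 8 := by
    have := Finset.card_inter_add_card_sdiff (Pfin lit i) B
    rw [Finset.inter_comm] at this
    rw [card_Pfin hocc] at this
    omega
  have hh : SatVert.var (m := m) i true ∉ B := hRB _ (mem_Rfin.2 (Or.inl ⟨true, rfl⟩))
  have hle := le_of_subset_component hsc (Rfin (m := m) i ∪ (Pfin lit i \ B))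
    (SatVert.var i true) (compl_of hh) ?_
  · rw [Finset.card_union_of_disjoint hdisj, card_Rfin] at hle
    omega
  · intro v hvS
    rcases Finset.mem_union.1 hvS with hv | hv
    · obtain ⟨hh', hv', hreach⟩ := reach_var lit i hRB hk (hRB _ hv) (Or.inl hv)
      exact ⟨hv', hreach⟩
    · rw [Finset.mem_sdiff] at hv
      rcases mem_Pfin.1 hv.1 with ⟨j, a, h1, hform⟩
      obtain ⟨hh', hv', hreach⟩ := reach_var lit i hRB hk hv.2 (Or.inr ⟨j, a, h1, hform⟩)
      exact ⟨hv', hreach⟩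

end KeyLemmas2

section BackMain
variable {n m : ℕ} {lit : Fin m → Fin 3 → Fin n × Bool} {B : Finset (SatVert n m)}

lemma omega_helper {n m Bc b c d z : ℕ} (h3m : 3 * m = 4 * n) (hcard : Bc ≤ n + 2 * m)
    (hb : b + c = Bc) (hs : 6 * m + 2 * d ≤ 3 * c) (hzr : n - z ≤ b) (hzd : 5 * z ≤ d)
    (hzn : z ≤ n) : z = 0 := by omega

lemma three_m_eq (hocc : ∀ p : Fin n × Bool,
      (Finset.univ.filter fun ja : Fin m × Fin 3 => lit ja.1 ja.2 = p).card = 2) :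
    3 * m = 4 * n := by
  have hcount := Finset.card_eq_sum_card_fiberwise
    (f := fun ja : Fin m × Fin 3 => lit ja.1 ja.2) (s := univ) (t := univ)
    (fun x _ => Finset.mem_univ _)
  rw [Finset.sum_congr rfl (fun p _ => hocc p), Finset.sum_const, Finset.card_univ,
    Finset.card_univ] at hcount
  simp only [Fintype.card_prod, Fintype.card_fin, Fintype.card_bool, smul_eq_mul] at hcount
  omega

variable (lit B) in
lemma backward
    (hocc : ∀ p : Fin n × Bool,
      (Finset.univ.filter fun ja : Fin m × Fin 3 => lit ja.1 ja.2 = p).card = 2)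
    (hn : 0 < n) (hcard : B.card ≤ n + 2 * m)
    (hsc : SmallComponents (SimpleGraph.fromRel (satRel n m lit))
      ((B : Finset (SatVert n m)) : Set (SatVert n m)) (n + 2 * m)) :
    ∃ σ : Fin n → Bool, ∀ j : Fin m, ∃ a : Fin 3, σ (lit j a).1 = (lit j a).2 := by
  have h3m : 3 * m = 4 * n := three_m_eq hocc
  have hk : 11 ≤ n + 2 * m := by omega
  have hbudget := budget B
  -- the per-clause inequality
  have key3 : ∀ j : Fin m, 6 + 2 * (B ∩ Dfin j).card ≤ 3 * (B ∩ Sfin j).card := by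
    intro j
    have hS := card_S_eq B j
    rcases Nat.lt_or_ge (B ∩ Wfin j).card 2 with hlt | hge
    · by_cases h0 : (B ∩ Wfin j).card = 0
      · have := lemA lit B hsc hk h0
        omega
      · have h1 : (B ∩ Wfin j).card = 1 := by omega
        have := lemB lit B hsc hk h1
        omega
    · omega
  have hsum3 : 6 * m + 2 * ∑ j : Fin m, (B ∩ Dfin j).card ≤
      3 * ∑ j : Fin m, (B ∩ Sfin j).card := by
    have h := Finset.sum_le_sum (fun j (_ : j ∈ univ) => key3 j)
    rw [Finset.sum_add_distrib, Finset.sum_const, Finset.card_univ] at h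
    rw [← Finset.mul_sum, ← Finset.mul_sum] at h
    simpa [mul_comm] using h
  set Z : Finset (Fin n) := univ.filter (fun i => (B ∩ Rfin i).card = 0) with hZdef
  clear_value Z
  have hzr : (n - Z.card) ≤ ∑ i : Fin n, (B ∩ Rfin i).card := by
    have h1 : ∀ i ∈ univ \ Z, 1 ≤ (B ∩ Rfin i).card := by
      intro i hi
      rw [Finset.mem_sdiff] at hi
      have h2 := hi.2
      rw [hZdef, Finset.mem_filter] at h2
      have h3 : ¬ ((B ∩ Rfin i).card = 0) := fun h => h2 ⟨Finset.mem_univ _, h⟩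
      omega
    calc n - Z.card = (univ \ Z).card := by
          rw [Finset.card_sdiff_of_subset (Finset.subset_univ _), Finset.card_univ]
          simp
      _ = ∑ i ∈ univ \ Z, 1 := by rw [Finset.sum_const, smul_eq_mul, mul_one]
      _ ≤ ∑ i ∈ univ \ Z, (B ∩ Rfin i).card := Finset.sum_le_sum h1
      _ ≤ ∑ i : Fin n, (B ∩ Rfin i).card :=
          Finset.sum_le_sum_of_subset (Finset.subset_univ _)
  have hzd : 5 * Z.card ≤ ∑ j : Fin m, (B ∩ Dfin j).card := by
    have h5 : ∀ i ∈ Z, 5 ≤ (B ∩ Pfin lit i).card := by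
      intro i hi
      rw [hZdef, Finset.mem_filter] at hi
      exact lemVar lit B hocc hsc hk hi.2
    calc 5 * Z.card = ∑ i ∈ Z, 5 := by rw [Finset.sum_const, smul_eq_mul, mul_comm]
      _ ≤ ∑ i ∈ Z, (B ∩ Pfin lit i).card := Finset.sum_le_sum h5
      _ ≤ (B ∩ univ.biUnion (Dfin (n := n))).card := sum_pend_le B Z
      _ = ∑ j : Fin m, (B ∩ Dfin j).card := (sum_d_eq B).symm
  have hzn : Z.card ≤ n := le_trans (Finset.card_le_card (Finset.subset_univ _)) (by simp)
  have hz0 : Z.card = 0 := omega_helper h3m hcard hbudget hsum3 hzr hzd hzn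
  have hri : ∀ i : Fin n, 1 ≤ (B ∩ Rfin i).card := by
    intro i
    rcases Nat.eq_zero_or_pos (B ∩ Rfin i).card with h | h
    · exfalso
      have : i ∈ Z := by rw [hZdef, Finset.mem_filter]; exact ⟨Finset.mem_univ _, h⟩
      rw [Finset.card_eq_zero.1 hz0] at this
      exact absurd this (Finset.notMem_empty i)
    · exact h
  have hrsum : n ≤ ∑ i : Fin n, (B ∩ Rfin i).card := by
    calc n = ∑ _i : Fin n, 1 := by simp
      _ ≤ _ := Finset.sum_le_sum (fun i _ => hri i)
  have hsj2 : ∀ j : Fin m, 2 ≤ (B ∩ Sfin j).card := fun j => by have := key3 j; omega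
  have hssum : ∑ j : Fin m, (B ∩ Sfin j).card ≤ 2 * m := by omega
  have hseq : ∀ j : Fin m, (B ∩ Sfin j).card = 2 := by
    intro j
    by_contra hne
    have hgt : 2 < (B ∩ Sfin j).card := by have := hsj2 j; omega
    have : ∑ _j : Fin m, 2 < ∑ j : Fin m, (B ∩ Sfin j).card :=
      Finset.sum_lt_sum (fun j _ => hsj2 j) ⟨j, Finset.mem_univ _, hgt⟩
    simp only [Finset.sum_const, Finset.card_univ, Fintype.card_fin, smul_eq_mul] at this
    omega
  have hreq : ∀ i : Fin n, (B ∩ Rfin i).card = 1 := by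
    intro i
    by_contra hne
    have hgt : 1 < (B ∩ Rfin i).card := by have := hri i; omega
    have h1 : ∑ _i : Fin n, 1 < ∑ i : Fin n, (B ∩ Rfin i).card :=
      Finset.sum_lt_sum (fun i _ => hri i) ⟨i, Finset.mem_univ _, hgt⟩
    simp only [Finset.sum_const, Finset.card_univ, Fintype.card_fin, smul_eq_mul,
      mul_one] at h1
    have hs2m : ∑ j : Fin m, (B ∩ Sfin j).card = 2 * m := by
      rw [Finset.sum_congr rfl (fun j _ => hseq j), Finset.sum_const, Finset.card_univ]
      simp [mul_comm]
    omega
  -- extract the satisfied literal of each clause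
  have hclause : ∀ j : Fin m, ∃ a, SatVert.lit (n := n) j a ∉ B ∧
      SatVert.var (lit j a).1 (lit j a).2 ∈ B := by
    intro j
    have hs2 : (B ∩ Sfin j).card = 2 := hseq j
    have hSplit := card_S_eq B j
    have hw2 : (B ∩ Wfin j).card = 2 ∧ (B ∩ Dfin j).card = 0 := by
      by_cases h0 : (B ∩ Wfin j).card = 0
      · have := lemA lit B hsc hk h0
        omega
      · by_cases h1 : (B ∩ Wfin j).card = 1
        · have := lemB lit B hsc hk h1
          omega
        · omega
    exact lemC lit B hsc hk hw2.1 hw2.2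
  refine ⟨fun i => if SatVert.var (m := m) i true ∈ B then true else false, ?_⟩
  intro j
  obtain ⟨a, hanB, hvB⟩ := hclause j
  refine ⟨a, ?_⟩
  show (if SatVert.var (lit j a).1 true ∈ B then true else false) = (lit j a).2
  rcases hs0 : (lit j a).2 with _ | _
  · -- literal is negative: var _ false ∈ B, so var _ true ∉ B
    rw [hs0] at hvB
    have htrue : SatVert.var (m := m) (lit j a).1 true ∉ B := by
      intro htB
      have hsub : ({SatVert.var (lit j a).1 true, SatVert.var (lit j a).1 false} :
          Finset (SatVert n m)) ⊆ B ∩ Rfin (lit j a).1 := by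
        intro v hv
        rw [Finset.mem_insert, Finset.mem_singleton] at hv
        rcases hv with rfl | rfl
        · exact Finset.mem_inter.2 ⟨htB, mem_Rfin.2 (Or.inl ⟨true, rfl⟩)⟩
        · exact Finset.mem_inter.2 ⟨hvB, mem_Rfin.2 (Or.inl ⟨false, rfl⟩)⟩
      have := Finset.card_le_card hsub
      rw [Finset.card_pair (by simp), hreq (lit j a).1] at this
      omega
    rw [if_neg htrue]
  · rw [hs0] at hvB
    rw [if_pos hvB]

end BackMain

section Color
variable {n m : ℕ} {lit : Fin m → Fin 3 → Fin n × Bool}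

def colorFn : SatVert n m → Fin 2
  | .var _ _ => 0
  | .lit _ _ => 0
  | _ => 1

lemma colorable : (SimpleGraph.fromRel (satRel n m lit)).Colorable 2 := by
  refine ⟨SimpleGraph.Coloring.mk colorFn ?_⟩
  intro v w h
  rw [SimpleGraph.fromRel_adj] at h
  obtain ⟨hne, h | h⟩ := h <;>
    cases v <;> cases w <;> simp [satRel] at h <;> simp [colorFn]

end Color
end Aux

/-- for a 3-CNF formula in which every literal occurs in exactly two
clauses, with `k = n + 2m`, the formula is satisfiable iff the reduction graph has a set `B`
of at most `k` vertices whose deletion leaves components of at most `k` vertices; moreover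
the graph is bipartite, and whenever such a `B` exists, one exists using only vertices
`x_i`, `¬x_i` and `l_j^a`. -/
theorem stmt8 (n m : ℕ) (lit : Fin m → Fin 3 → Fin n × Bool)
    (hocc : ∀ p : Fin n × Bool,
      (Finset.univ.filter fun ja : Fin m × Fin 3 => lit ja.1 ja.2 = p).card = 2) :
    ((∃ σ : Fin n → Bool, ∀ j : Fin m, ∃ a : Fin 3, σ (lit j a).1 = (lit j a).2) ↔
      ∃ B : Finset (SatVert n m), B.card ≤ n + 2 * m ∧
        SmallComponents (SimpleGraph.fromRel (satRel n m lit)) (B : Set (SatVert n m))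
          (n + 2 * m)) ∧
    (SimpleGraph.fromRel (satRel n m lit)).Colorable 2 ∧
    ((∃ B : Finset (SatVert n m), B.card ≤ n + 2 * m ∧
        SmallComponents (SimpleGraph.fromRel (satRel n m lit)) (B : Set (SatVert n m))
          (n + 2 * m)) →
      ∃ B : Finset (SatVert n m), B.card ≤ n + 2 * m ∧
        SmallComponents (SimpleGraph.fromRel (satRel n m lit)) (B : Set (SatVert n m))
          (n + 2 * m) ∧
        ∀ v ∈ B, (∃ i s, v = SatVert.var i s) ∨ (∃ j a, v = SatVert.lit j a)) := by
  by_cases hn : n = 0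
  · subst hn
    have hsat : ∃ σ : Fin 0 → Bool, ∀ j : Fin m, ∃ a : Fin 3,
        σ (lit j a).1 = (lit j a).2 :=
      ⟨Fin.elim0, fun j => ((lit j 0).1).elim0⟩
    rcases Nat.eq_zero_or_pos m with hm | hm
    · subst hm
      haveI hempty : IsEmpty (SatVert 0 0) := ⟨fun v => by
        cases v with
        | var i _ => exact i.elim0
        | cv i _ => exact i.elim0
        | lit j _ => exact j.elim0
        | bv j _ => exact j.elim0
        | dv j _ => exact j.elim0
        | ev j _ => exact j.elim0⟩
      have hsmall : SmallComponents (SimpleGraph.fromRel (satRel 0 0 lit))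
          ((∅ : Finset (SatVert 0 0)) : Set (SatVert 0 0)) (0 + 2 * 0) := by
        intro c
        have : c.supp = ∅ := Set.eq_empty_of_isEmpty _
        rw [this]
        simp
      refine ⟨⟨fun _ => ⟨∅, by simp, hsmall⟩, fun _ => hsat⟩, Aux.colorable, fun _ =>
        ⟨∅, by simp, hsmall, by simp⟩⟩
    · exact ((lit ⟨0, hm⟩ 0).1).elim0
  · have hn' : 0 < n := Nat.pos_of_ne_zero hn
    have h3m : 3 * m = 4 * n := Aux.three_m_eq hocc
    have hk5 : 5 ≤ n + 2 * m := by omega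
    refine ⟨⟨?_, ?_⟩, Aux.colorable, ?_⟩
    · rintro ⟨σ, hσ⟩
      choose ch hch using hσ
      obtain ⟨h1, h2, h3⟩ := Aux.forward (lit := lit) (σ := σ) (ch := ch) hocc hk5 hch
      exact ⟨_, h1, h2⟩
    · rintro ⟨B, hB1, hB2⟩
      exact Aux.backward lit B hocc hn' hB1 hB2
    · rintro ⟨B, hB1, hB2⟩
      obtain ⟨σ, hσ⟩ := Aux.backward lit B hocc hn' hB1 hB2
      choose ch hch using hσ
      obtain ⟨h1, h2, h3⟩ := Aux.forward (lit := lit) (σ := σ) (ch := ch) hocc hk5 hch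
      exact ⟨_, h1, h2, h3⟩
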